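/- Let X = ℝ² endowed with the ℓ∞–ℓ₁ norm defined by ‖(x₁,x₂)‖ = |x₁| + |x₂| when x₁x₂ ≤ 0 and ‖(x₁,x₂)‖ = max{|x₁|, |x₂|} when x₁x₂ ≥ 0. Then Ω(X) = 49/40. -/

import Mathlib

private lemma hex_abs_add (a c t : ℝ) (h1 : |a+c| ≤ t) (h2 : |a-c| ≤ t) : |a| + |c| ≤ t := by
  have g1 := abs_le.mp h1
  have g2 := abs_le.mp h2
  rcases abs_cases a with ⟨e1, _⟩ | ⟨e1, _⟩ <;> rcases abs_cases c with ⟨e2, _⟩ | ⟨e2, _⟩ <;>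
    rw [e1, e2] <;> linarith [g1.1, g1.2, g2.1, g2.2]

private lemma hex_tri (a b : ℝ) : |a-b| ≤ |a| + |b| ∧ |a| ≤ |a-b| + |b| ∧ |b| ≤ |a-b| + |a| := by
  refine ⟨abs_sub a b, ?_, ?_⟩
  · have h := abs_add_le (a-b) b; rwa [sub_add_cancel] at h
  · have h := abs_sub a (a-b); simpa [add_comm] using h

private lemma hex_choice (a b : ℝ) (h : max |a| (max |b| |a-b|) = 1) :
    |a| = 1 ∨ |b| = 1 ∨ |a-b| = 1 := by
  rcases max_choice |a| (max |b| |a-b|) with h' | h'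
  · left; rw [← h, h']
  · rcases max_choice |b| |a-b| with h'' | h''
    · right; left; rw [← h, h', h'']
    · right; right; rw [← h, h', h'']

private lemma hex_key (a b c d t : ℝ)
    (hx : max |a| (max |b| |a-b|) = 1)
    (hy : max |c| (max |d| |c-d|) = 1)
    (h1 : max |a+c| (max |b+d| |(a+c)-(b+d)|) = t)
    (h2 : max |a-c| (max |b-d| |(a-c)-(b-d)|) = t) : 4/3 ≤ t := by
  have q3 : |(a-b)+(c-d)| ≤ t := by
    have h : |(a+c)-(b+d)| ≤ t := h1 ▸ le_max_of_le_right (le_max_right |b+d| |(a+c)-(b+d)|)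
    convert h using 2; ring
  have q6 : |(a-b)-(c-d)| ≤ t := by
    have h : |(a-c)-(b-d)| ≤ t := h2 ▸ le_max_of_le_right (le_max_right |b-d| |(a-c)-(b-d)|)
    convert h using 2; ring
  have p1 : |a| + |c| ≤ t :=
    hex_abs_add a c t (h1 ▸ le_max_left _ _) (h2 ▸ le_max_left _ _)
  have p2 : |b| + |d| ≤ t :=
    hex_abs_add b d t (h1 ▸ le_max_of_le_right (le_max_left _ _))
      (h2 ▸ le_max_of_le_right (le_max_left _ _))
  have p3 : |a-b| + |c-d| ≤ t := hex_abs_add (a-b) (c-d) t q3 q6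
  obtain ⟨t1, t2, t3⟩ := hex_tri a b
  obtain ⟨s1, s2, s3⟩ := hex_tri c d
  have b1 : |a| ≤ 1 := hx ▸ le_max_left _ _
  have b2 : |b| ≤ 1 := hx ▸ le_max_of_le_right (le_max_left _ _)
  have b3 : |a-b| ≤ 1 := hx ▸ le_max_of_le_right (le_max_right _ _)
  have c1 : |c| ≤ 1 := hy ▸ le_max_left _ _
  have c2 : |d| ≤ 1 := hy ▸ le_max_of_le_right (le_max_left _ _)
  have c3 : |c-d| ≤ 1 := hy ▸ le_max_of_le_right (le_max_right _ _)
  rcases hex_choice a b hx with h | h | h <;> rcases hex_choice c d hy with h' | h' | h' <;>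
    linarith

private lemma hex_norm1 (a b : ℝ) (h : a * b ≤ 0) :
    |a| + |b| = max |a| (max |b| |a-b|) := by
  have h3 : |a - b| = |a| + |b| := by
    rcases abs_cases a with ⟨e1, s1⟩ | ⟨e1, s1⟩ <;> rcases abs_cases b with ⟨e2, s2⟩ | ⟨e2, s2⟩ <;>
      rcases abs_cases (a - b) with ⟨e3, s3⟩ | ⟨e3, s3⟩ <;> rw [e1, e2, e3] <;> nlinarith
  rw [h3, max_eq_right (le_add_of_nonneg_left (abs_nonneg a)),
    max_eq_right (le_add_of_nonneg_right (abs_nonneg b))]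

private lemma hex_norm2 (a b : ℝ) (h : 0 ≤ a * b) :
    max |a| |b| = max |a| (max |b| |a-b|) := by
  have h3 : |a - b| ≤ max |a| |b| := by
    rcases abs_cases a with ⟨e1, s1⟩ | ⟨e1, s1⟩ <;> rcases abs_cases b with ⟨e2, s2⟩ | ⟨e2, s2⟩ <;>
      rcases abs_cases (a - b) with ⟨e3, s3⟩ | ⟨e3, s3⟩ <;>
      rw [e3] <;> rw [le_max_iff, e1, e2] <;>
      first
        | (left; nlinarith)
        | (right; nlinarith)
  rw [← max_assoc, max_eq_left h3]

/-- The orthogonal geometric constant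
`Ω(X) = sup{ (‖x+2y‖² + ‖2x+y‖²)/(5‖x+y‖²) : x, y ∈ S_X, x ⊥_I y }`. -/
noncomputable def OmegaConst (X : Type*) [NormedAddCommGroup X] [NormedSpace ℝ X] : ℝ :=
  sSup { r : ℝ | ∃ x y : X, ‖x‖ = 1 ∧ ‖y‖ = 1 ∧ ‖x + y‖ = ‖x - y‖ ∧
    r = (‖x + (2 : ℝ) • y‖ ^ 2 + ‖(2 : ℝ) • x + y‖ ^ 2) / (5 * ‖x + y‖ ^ 2) }

/-- Let `X` be `ℝ²` endowed with the `ℓ∞–ℓ₁` norm: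
`‖(a,b)‖ = |a| + |b|` if `ab ≤ 0` and `‖(a,b)‖ = max {|a|, |b|}` if `ab ≥ 0`
(formalized as a two-dimensional real normed space with coordinates `e₁, e₂` in
which every vector `a • e₁ + b • e₂` has this norm). Then `Ω(X) = 49/40`. -/
theorem omegaConst_linfty_lone_norm
    {X : Type*} [NormedAddCommGroup X] [NormedSpace ℝ X]
    (e₁ e₂ : X) (hspan : ∀ x : X, ∃ a b : ℝ, x = a • e₁ + b • e₂)
    (hnorm : ∀ a b : ℝ,
      (a * b ≤ 0 → ‖a • e₁ + b • e₂‖ = |a| + |b|) ∧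
      (0 ≤ a * b → ‖a • e₁ + b • e₂‖ = max |a| |b|)) :
    OmegaConst X = 49 / 40 := by
  have norm_eq : ∀ a b : ℝ, ‖a • e₁ + b • e₂‖ = max |a| (max |b| |a - b|) := by
    intro a b
    rcases le_total (a * b) 0 with h | h
    · rw [(hnorm a b).1 h, hex_norm1 a b h]
    · rw [(hnorm a b).2 h, hex_norm2 a b h]
  set S : Set ℝ := { r : ℝ | ∃ x y : X, ‖x‖ = 1 ∧ ‖y‖ = 1 ∧ ‖x + y‖ = ‖x - y‖ ∧
    r = (‖x + (2 : ℝ) • y‖ ^ 2 + ‖(2 : ℝ) • x + y‖ ^ 2) / (5 * ‖x + y‖ ^ 2) } with hS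
  -- upper bound
  have ub : ∀ r ∈ S, r ≤ 49 / 40 := by
    rintro r ⟨x, y, hx, hy, hxy, rfl⟩
    obtain ⟨a, b, rfl⟩ := hspan x
    obtain ⟨c, d, rfl⟩ := hspan y
    have eadd : (a • e₁ + b • e₂) + (c • e₁ + d • e₂) = (a+c) • e₁ + (b+d) • e₂ := by
      module
    have esub : (a • e₁ + b • e₂) - (c • e₁ + d • e₂) = (a-c) • e₁ + (b-d) • e₂ := by
      module
    rw [norm_eq] at hx hy
    have ht : 4/3 ≤ ‖(a • e₁ + b • e₂) + (c • e₁ + d • e₂)‖ := by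
      rw [eadd, norm_eq]
      refine hex_key a b c d _ hx hy rfl ?_
      rw [← norm_eq, ← esub, ← hxy, eadd, norm_eq]
    set t : ℝ := ‖(a • e₁ + b • e₂) + (c • e₁ + d • e₂)‖ with hT
    have hA : ‖(a • e₁ + b • e₂) + (2:ℝ) • (c • e₁ + d • e₂)‖ ≤ t + 1 := by
      have e2 : (a • e₁ + b • e₂) + (2:ℝ) • (c • e₁ + d • e₂)
          = ((a • e₁ + b • e₂) + (c • e₁ + d • e₂)) + (c • e₁ + d • e₂) := by module
      rw [e2]
      calc ‖((a • e₁ + b • e₂) + (c • e₁ + d • e₂)) + (c • e₁ + d • e₂)‖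
          ≤ t + ‖c • e₁ + d • e₂‖ := norm_add_le _ _
        _ = t + 1 := by rw [norm_eq, hy]
    have hB : ‖(2:ℝ) • (a • e₁ + b • e₂) + (c • e₁ + d • e₂)‖ ≤ t + 1 := by
      have e2 : (2:ℝ) • (a • e₁ + b • e₂) + (c • e₁ + d • e₂)
          = ((a • e₁ + b • e₂) + (c • e₁ + d • e₂)) + (a • e₁ + b • e₂) := by module
      rw [e2]
      calc ‖((a • e₁ + b • e₂) + (c • e₁ + d • e₂)) + (a • e₁ + b • e₂)‖
          ≤ t + ‖a • e₁ + b • e₂‖ := norm_add_le _ _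
        _ = t + 1 := by rw [norm_eq, hx]
    have hA0 := norm_nonneg ((a • e₁ + b • e₂) + (2:ℝ) • (c • e₁ + d • e₂))
    have hB0 := norm_nonneg ((2:ℝ) • (a • e₁ + b • e₂) + (c • e₁ + d • e₂))
    rw [div_le_iff₀ (by positivity)]
    nlinarith [mul_nonneg (by linarith : (0:ℝ) ≤ 3*t-4) (by linarith : (0:ℝ) ≤ 11*t+4),
      mul_le_mul hA hA hA0 (by linarith), mul_le_mul hB hB hB0 (by linarith),
      sq_nonneg (t+1)]
  -- membership of 49/40
  have mem : (49/40 : ℝ) ∈ S := by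
    refine ⟨(2/3 : ℝ) • e₁ + (-(1/3) : ℝ) • e₂, (-(2/3) : ℝ) • e₁ + (-1 : ℝ) • e₂,
      ?_, ?_, ?_, ?_⟩
    · rw [norm_eq]; norm_num [abs_of_nonneg, abs_of_nonpos, max_def]
    · rw [norm_eq]; norm_num [abs_of_nonneg, abs_of_nonpos, max_def]
    · have e1 : ((2/3 : ℝ) • e₁ + (-(1/3) : ℝ) • e₂) + ((-(2/3) : ℝ) • e₁ + (-1 : ℝ) • e₂)
          = (0 : ℝ) • e₁ + (-(4/3) : ℝ) • e₂ := by module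
      have e2 : ((2/3 : ℝ) • e₁ + (-(1/3) : ℝ) • e₂) - ((-(2/3) : ℝ) • e₁ + (-1 : ℝ) • e₂)
          = (4/3 : ℝ) • e₁ + (2/3 : ℝ) • e₂ := by module
      rw [e1, e2, norm_eq, norm_eq]; norm_num [abs_of_nonneg, abs_of_nonpos, max_def]
    · have e1 : ((2/3 : ℝ) • e₁ + (-(1/3) : ℝ) • e₂)
          + (2 : ℝ) • ((-(2/3) : ℝ) • e₁ + (-1 : ℝ) • e₂)
          = (-(2/3) : ℝ) • e₁ + (-(7/3) : ℝ) • e₂ := by module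
      have e2 : (2 : ℝ) • ((2/3 : ℝ) • e₁ + (-(1/3) : ℝ) • e₂)
          + ((-(2/3) : ℝ) • e₁ + (-1 : ℝ) • e₂)
          = (2/3 : ℝ) • e₁ + (-(5/3) : ℝ) • e₂ := by module
      have e3 : ((2/3 : ℝ) • e₁ + (-(1/3) : ℝ) • e₂) + ((-(2/3) : ℝ) • e₁ + (-1 : ℝ) • e₂)
          = (0 : ℝ) • e₁ + (-(4/3) : ℝ) • e₂ := by module
      rw [e1, e2, e3, norm_eq, norm_eq, norm_eq]; norm_num [abs_of_nonneg, abs_of_nonpos, max_def]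
  exact le_antisymm (csSup_le ⟨49/40, mem⟩ ub) (le_csSup ⟨49/40, fun r hr => ub r hr⟩ mem)
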